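/- Let a > 0, β ∈ (0,1), B ≥ 0, C₁ > 0, and let A : [0,∞) → [0,∞) be a bounded Borel function vanishing outside [0,a] such that A(t) ≤ B + C₁ ∫_0^{a−t} A(t+s) s^{β−1} ds for all t ∈ [0,a]. Then for every σ > 0 with κ := C₁ Γ(β) σ^{−β} < 1 one has sup_{t∈[0,a]} A(t) ≤ e^{σa} B/(1 − κ). In particular, if the inequality holds for every B in a family with B → 0, then sup_{t∈[0,a]} A(t) → 0. -/

import Mathlib

set_option autoImplicit false

open MeasureTheory Filter Set

theorem gron_aux
    (a β B C₁ σ : ℝ) (ha : 0 < a) (hβ : β ∈ Ioo (0 : ℝ) 1)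
    (hB : 0 ≤ B) (hC₁ : 0 < C₁)
    (A : ℝ → ℝ) (hA_meas : Measurable A) (hA_nonneg : ∀ t, 0 ≤ A t)
    (hA_bdd : ∃ M, ∀ t, A t ≤ M)
    (hA_ineq : ∀ t ∈ Icc (0 : ℝ) a,
      A t ≤ B + C₁ * ∫ s in Set.Ioc (0 : ℝ) (a - t), A (t + s) * s ^ (β - 1))
    (hσ : 0 < σ) (hκ : C₁ * Real.Gamma β / σ ^ β < 1) :
    ∀ t ∈ Icc (0 : ℝ) a,
      A t ≤ Real.exp (σ * a) * B / (1 - C₁ * Real.Gamma β / σ ^ β) := by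
  obtain ⟨M, hM⟩ := hA_bdd
  have hβ0 : (0:ℝ) < β := hβ.1
  have hΓ : 0 < Real.Gamma β := Real.Gamma_pos_of_pos hβ0
  set κ := C₁ * Real.Gamma β / σ ^ β with hκdef
  have hκ0 : 0 ≤ κ := by positivity
  have h1κ : 0 < 1 - κ := by linarith
  set g : ℝ → ℝ := fun t => Real.exp (σ * t) * A t with hg
  have hSne : (g '' Icc 0 a).Nonempty := ⟨g 0, 0, ⟨le_refl 0, ha.le⟩, rfl⟩
  have hSbdd : BddAbove (g '' Icc 0 a) := by
    refine ⟨Real.exp (σ * a) * max M 0, ?_⟩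
    rintro _ ⟨t, ht, rfl⟩
    exact mul_le_mul (Real.exp_le_exp.2 (by nlinarith [ht.2])) ((hM t).trans (le_max_left _ _))
      (hA_nonneg t) (Real.exp_pos _).le
  set N := sSup (g '' Icc 0 a) with hN
  have hgN : ∀ t ∈ Icc (0:ℝ) a, g t ≤ N := fun t ht => le_csSup hSbdd ⟨t, ht, rfl⟩
  have hN0 : 0 ≤ N := le_trans (mul_nonneg (Real.exp_pos _).le (hA_nonneg 0)) (hgN 0 ⟨le_refl 0, ha.le⟩)
  have hAN : ∀ t ∈ Icc (0:ℝ) a, A t ≤ Real.exp (-(σ * t)) * N := by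
    intro t ht
    have h := hgN t ht
    calc A t = Real.exp (-(σ * t)) * (Real.exp (σ * t) * A t) := by
          rw [← mul_assoc, ← Real.exp_add]; simp
      _ ≤ Real.exp (-(σ * t)) * N := by
          exact mul_le_mul_of_nonneg_left h (Real.exp_pos _).le
  -- integrability of the Gamma-type kernel
  have hφint : IntegrableOn (fun s : ℝ => s ^ (β - 1) * Real.exp (-(σ * s))) (Ioi 0) := by
    have := integrableOn_rpow_mul_exp_neg_mul_rpow (s := β - 1) (p := 1) (b := σ)
      (by linarith) one_pos hσ
    simpa [Real.rpow_one, neg_mul] using this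
  have hφval : ∫ s in Ioi (0:ℝ), s ^ (β - 1) * Real.exp (-(σ * s))
      = Real.Gamma β / σ ^ β := by
    rw [Real.integral_rpow_mul_exp_neg_mul_Ioi hβ0 hσ,
      Real.div_rpow zero_le_one hσ.le, Real.one_rpow]
    ring
  -- main estimate on N
  have key : ∀ t ∈ Icc (0:ℝ) a, g t ≤ Real.exp (σ * a) * B + κ * N := by
    intro t ht
    set c := a - t with hc
    have hc0 : 0 ≤ c := by linarith [ht.2]
    have hφIoc : IntegrableOn (fun s : ℝ => s ^ (β - 1) * Real.exp (-(σ * s))) (Ioc 0 c) :=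
      hφint.mono_set Ioc_subset_Ioi_self
    have hdint : IntegrableOn
        (fun s : ℝ => (N * Real.exp (-(σ * t))) * (s ^ (β - 1) * Real.exp (-(σ * s))))
        (Ioc 0 c) := hφIoc.const_mul _
    have hbound : ∀ s ∈ Ioc (0:ℝ) c, A (t + s) * s ^ (β - 1)
        ≤ (N * Real.exp (-(σ * t))) * (s ^ (β - 1) * Real.exp (-(σ * s))) := by
      intro s hs
      have hts : t + s ∈ Icc (0:ℝ) a := ⟨by linarith [ht.1, hs.1.le], by
        have := hs.2; simp only [hc] at this; linarith⟩
      have h1 : A (t + s) ≤ Real.exp (-(σ * (t + s))) * N := hAN _ hts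
      have h2 : (0:ℝ) ≤ s ^ (β - 1) := Real.rpow_nonneg hs.1.le _
      calc A (t + s) * s ^ (β - 1) ≤ (Real.exp (-(σ * (t + s))) * N) * s ^ (β - 1) :=
            mul_le_mul_of_nonneg_right h1 h2
        _ = (N * Real.exp (-(σ * t))) * (s ^ (β - 1) * Real.exp (-(σ * s))) := by
            rw [mul_add, neg_add, Real.exp_add]; ring
    have hfint : IntegrableOn (fun s : ℝ => A (t + s) * s ^ (β - 1)) (Ioc 0 c) := by
      refine Integrable.mono' hdint ?_ ?_
      · exact (Measurable.aestronglyMeasurable (by fun_prop))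
      · refine (ae_restrict_iff' measurableSet_Ioc).2 (ae_of_all _ fun s hs => ?_)
        rw [Real.norm_eq_abs, abs_of_nonneg
          (mul_nonneg (hA_nonneg _) (Real.rpow_nonneg hs.1.le _))]
        exact hbound s hs
    have hI1 : ∫ s in Ioc (0:ℝ) c, A (t + s) * s ^ (β - 1)
        ≤ ∫ s in Ioc (0:ℝ) c,
          (N * Real.exp (-(σ * t))) * (s ^ (β - 1) * Real.exp (-(σ * s))) :=
      setIntegral_mono_on hfint hdint measurableSet_Ioc hbound
    have hI2 : ∫ s in Ioc (0:ℝ) c, s ^ (β - 1) * Real.exp (-(σ * s))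
        ≤ ∫ s in Ioi (0:ℝ), s ^ (β - 1) * Real.exp (-(σ * s)) := by
      refine setIntegral_mono_set hφint ?_ (ae_of_all _ Ioc_subset_Ioi_self)
      refine (ae_restrict_iff' measurableSet_Ioi).2 (ae_of_all _ fun s hs => ?_)
      exact mul_nonneg (Real.rpow_nonneg (le_of_lt hs) _) (Real.exp_pos _).le
    have hI : ∫ s in Ioc (0:ℝ) c, A (t + s) * s ^ (β - 1)
        ≤ (N * Real.exp (-(σ * t))) * (Real.Gamma β / σ ^ β) := by
      calc ∫ s in Ioc (0:ℝ) c, A (t + s) * s ^ (β - 1)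
          ≤ ∫ s in Ioc (0:ℝ) c,
            (N * Real.exp (-(σ * t))) * (s ^ (β - 1) * Real.exp (-(σ * s))) := hI1
        _ = (N * Real.exp (-(σ * t))) *
            ∫ s in Ioc (0:ℝ) c, s ^ (β - 1) * Real.exp (-(σ * s)) := by
            rw [integral_const_mul]
        _ ≤ (N * Real.exp (-(σ * t))) * (Real.Gamma β / σ ^ β) := by
            rw [← hφval]
            exact mul_le_mul_of_nonneg_left hI2 (by positivity)
    have hAt := hA_ineq t ht
    have hexp : (0:ℝ) < Real.exp (σ * t) := Real.exp_pos _
    calc g t = Real.exp (σ * t) * A t := rfl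
      _ ≤ Real.exp (σ * t) * (B + C₁ * ∫ s in Ioc (0:ℝ) c, A (t + s) * s ^ (β - 1)) :=
          mul_le_mul_of_nonneg_left hAt hexp.le
      _ ≤ Real.exp (σ * t) * (B + C₁ * ((N * Real.exp (-(σ * t))) * (Real.Gamma β / σ ^ β))) := by
          refine mul_le_mul_of_nonneg_left (by nlinarith [hI]) hexp.le
      _ = Real.exp (σ * t) * B +
          (Real.exp (σ * t) * Real.exp (-(σ * t))) * (C₁ * (Real.Gamma β / σ ^ β) * N) := by
          ring
      _ = Real.exp (σ * t) * B + κ * N := by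
          rw [← Real.exp_add, add_neg_cancel, Real.exp_zero, hκdef]; ring
      _ ≤ Real.exp (σ * a) * B + κ * N := by
          have : Real.exp (σ * t) ≤ Real.exp (σ * a) :=
            Real.exp_le_exp.2 (by nlinarith [ht.2])
          nlinarith
  have hNle : N ≤ Real.exp (σ * a) * B + κ * N := by
    refine csSup_le hSne ?_
    rintro _ ⟨t, ht, rfl⟩
    exact key t ht
  have hNfin : N ≤ Real.exp (σ * a) * B / (1 - κ) := by
    rw [le_div_iff₀ h1κ]; nlinarith
  intro t ht
  have h1 : A t ≤ g t := by
    have : (1:ℝ) ≤ Real.exp (σ * t) := Real.one_le_exp (by nlinarith [ht.1])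
    simpa [hg] using le_mul_of_one_le_left (hA_nonneg t) this
  exact h1.trans ((hgN t ht).trans hNfin)

/-- a Gronwall-type estimate. If `A : [0,∞) → [0,∞)` is a
bounded Borel function vanishing outside `[0,a]` with
`A(t) ≤ B + C₁ ∫_0^{a-t} A(t+s) s^{β-1} ds` on `[0,a]`, then for every
`σ > 0` with `κ = C₁ Γ(β) σ^{-β} < 1` one has
`A(t) ≤ e^{σa} B / (1-κ)` on `[0,a]`. In particular, for a family of such
functions with constants `B → 0`, the suprema tend to `0`. -/
theorem stmt10
    (a β B C₁ : ℝ) (ha : 0 < a) (hβ : β ∈ Ioo (0 : ℝ) 1)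
    (hB : 0 ≤ B) (hC₁ : 0 < C₁)
    (A : ℝ → ℝ) (hA_meas : Measurable A) (hA_nonneg : ∀ t, 0 ≤ A t)
    (hA_bdd : ∃ M, ∀ t, A t ≤ M)
    (hA_supp : ∀ t, t ∉ Icc (0 : ℝ) a → A t = 0)
    (hA_ineq : ∀ t ∈ Icc (0 : ℝ) a,
      A t ≤ B + C₁ * ∫ s in Set.Ioc (0 : ℝ) (a - t), A (t + s) * s ^ (β - 1)) :
    (∀ σ > (0 : ℝ), C₁ * Real.Gamma β / σ ^ β < 1 →
      ∀ t ∈ Icc (0 : ℝ) a,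
        A t ≤ Real.exp (σ * a) * B / (1 - C₁ * Real.Gamma β / σ ^ β)) ∧
    (∀ (Bs : ℕ → ℝ) (As : ℕ → ℝ → ℝ),
      (∀ n, 0 ≤ Bs n) →
      (∀ n, Measurable (As n)) →
      (∀ n t, 0 ≤ As n t) →
      (∀ n, ∃ M, ∀ t, As n t ≤ M) →
      (∀ n t, t ∉ Icc (0 : ℝ) a → As n t = 0) →
      (∀ n, ∀ t ∈ Icc (0 : ℝ) a, As n t ≤ Bs n +
        C₁ * ∫ s in Set.Ioc (0 : ℝ) (a - t), As n (t + s) * s ^ (β - 1)) →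
      Tendsto Bs atTop (nhds 0) →
      Tendsto (fun n => ⨆ t : Icc (0 : ℝ) a, As n ↑t) atTop (nhds 0)) := by
  have hβ0 : (0:ℝ) < β := hβ.1
  have hΓ : 0 < Real.Gamma β := Real.Gamma_pos_of_pos hβ0
  constructor
  · intro σ hσ hκ
    exact gron_aux a β B C₁ σ ha hβ hB hC₁ A hA_meas hA_nonneg hA_bdd hA_ineq hσ hκ
  · intro Bs As hBs hAsm hAsn hAsb hAss hAsi hBto
    -- choose σ with κ = 1/2
    set σ : ℝ := (2 * (C₁ * Real.Gamma β)) ^ (1/β) with hσdef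
    have hσ : 0 < σ := Real.rpow_pos_of_pos (by positivity) _
    have hσβ : σ ^ β = 2 * (C₁ * Real.Gamma β) := by
      rw [hσdef, ← Real.rpow_mul (by positivity), one_div,
        inv_mul_cancel₀ hβ0.ne', Real.rpow_one]
    have hκ : C₁ * Real.Gamma β / σ ^ β = 1/2 := by
      rw [hσβ]; field_simp
    have hκlt : C₁ * Real.Gamma β / σ ^ β < 1 := by rw [hκ]; norm_num
    haveI : Nonempty (Icc (0:ℝ) a) := (nonempty_Icc.2 ha.le).to_subtype
    have hbd : ∀ n, ∀ t ∈ Icc (0:ℝ) a,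
        As n t ≤ Real.exp (σ * a) * Bs n / (1 - 1/2) := by
      intro n t ht
      have := gron_aux a β (Bs n) C₁ σ ha hβ (hBs n) hC₁ (As n) (hAsm n) (hAsn n)
        (hAsb n) (hAsi n) hσ hκlt t ht
      rwa [hκ] at this
    have hsup_le : ∀ n, (⨆ t : Icc (0:ℝ) a, As n ↑t)
        ≤ Real.exp (σ * a) * Bs n / (1 - 1/2) :=
      fun n => ciSup_le fun t => hbd n t t.2
    have hsup_nonneg : ∀ n, 0 ≤ ⨆ t : Icc (0:ℝ) a, As n ↑t := by
      intro n
      have hba : BddAbove (range fun t : Icc (0:ℝ) a => As n ↑t) :=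
        ⟨Real.exp (σ * a) * Bs n / (1 - 1/2), by
          rintro _ ⟨t, rfl⟩; exact hbd n t t.2⟩
      exact le_trans (hAsn n ((⟨0, le_refl 0, ha.le⟩ : Icc (0:ℝ) a) : ℝ))
        (le_ciSup hba (⟨0, le_refl 0, ha.le⟩ : Icc (0:ℝ) a))
    have hlim : Tendsto (fun n => Real.exp (σ * a) * Bs n / (1 - 1/2)) atTop (nhds 0) := by
      have := ((hBto.const_mul (Real.exp (σ * a))).div_const (1 - 1/2))
      simpa using this
    exact squeeze_zero hsup_nonneg hsup_le hlim
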